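/- Precise update for edge removal in acyclic functional graphs: Let e be a binary relation on V that is acyclic and partial-functional (e(u,v) ∧ e(u,w) → v = w). Suppose e(s,t), and define e'(v₁,v₂) := e(v₁,v₂) ∧ ¬(v₁ = s ∧ v₂ = t). Then for all v₁, v₂: e'*(v₁,v₂) ↔ e*(v₁,v₂) ∧ ¬(e*(v₁,s) ∧ e*(t,v₂)). -/

import Mathlib

theorem stmt_17 {V : Type*} (e : V → V → Prop) (s t : V)
    (hacyc : ∀ a : V, ¬ Relation.TransGen e a a)
    (hfunc : ∀ u v w : V, e u v → e u w → v = w)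
    (hst : e s t) :
    ∀ v₁ v₂ : V,
      Relation.ReflTransGen (fun a b => e a b ∧ ¬ (a = s ∧ b = t)) v₁ v₂ ↔
        (Relation.ReflTransGen e v₁ v₂ ∧
          ¬ (Relation.ReflTransGen e v₁ s ∧ Relation.ReflTransGen e t v₂)) := by
  intro v₁ v₂
  constructor
  · intro h
    have hmono : Relation.ReflTransGen e v₁ v₂ :=
      Relation.ReflTransGen.mono (fun a b (hab : e a b ∧ ¬ (a = s ∧ b = t)) => hab.1) v₁ v₂ h
    refine ⟨hmono, ?_⟩
    rintro ⟨h1s, ht2⟩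
    -- key: if e'* a b and e* a s then e* b s
    have key : ∀ a b, Relation.ReflTransGen (fun a b => e a b ∧ ¬ (a = s ∧ b = t)) a b →
        Relation.ReflTransGen e a s → Relation.ReflTransGen e b s := by
      intro a b hab
      induction hab using Relation.ReflTransGen.head_induction_on with
      | refl => exact id
      | head h' htail ih =>
        rename_i a x
        intro has
        rcases Relation.ReflTransGen.cases_head has with heq | ⟨y, hay, hys⟩
        · exfalso
          have := hfunc a x t h'.1 (heq ▸ hst)
          exact h'.2 ⟨heq, this⟩
        · have := hfunc a x y h'.1 hay
          exact ih (this ▸ hys)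
    have h2s : Relation.ReflTransGen e v₂ s := key v₁ v₂ h h1s
    have : Relation.TransGen e s s :=
      Relation.TransGen.head' hst (ht2.trans h2s)
    exact hacyc s this
  · rintro ⟨h12, hno⟩
    induction h12 using Relation.ReflTransGen.head_induction_on with
    | refl => exact Relation.ReflTransGen.refl
    | head h' htail ih =>
      rename_i a x
      by_cases hc : a = s ∧ x = t
      · exact absurd ⟨hc.1 ▸ Relation.ReflTransGen.refl,
          hc.2 ▸ htail⟩ hno
      · refine Relation.ReflTransGen.head ⟨h', hc⟩ (ih ?_)
        rintro ⟨hxs, ht2⟩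
        exact hno ⟨Relation.ReflTransGen.head h' hxs, ht2⟩
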